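/- Let ξ > 0, let M ≥ 1 be an integer, and let E satisfy 0 ≤ E ≤ (1+ξ)/(1+3ξ). Then the minimum of f_{M,ξ}(p) over all vectors p = (p_0, …, p_M) ∈ ℝ^{M+1} satisfying p_n ≥ 0 for all n, ∑_{n=0}^{M} p_n = 1, and ∑_{n=0}^{M} n·p_n ≤ E, is attained at the unique point given by p_0 = 1−E, p_1 = E, and p_n = 0 for all n ∈ {2, …, M}. -/

import Mathlib

open Finset

/-- The objective function `f_{M,ξ}` of the unidirectional teleportation optimization:
`f_{M,ξ}(p) = (1/(1+ξ)) [ (∑_{n=0}^{M} p_n/(1+ξ)^n)^2 + (∑_{n=1}^{M} p_n ξ/(1+ξ)^n)^2 ]`. -/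
noncomputable def fUni (M : ℕ) (ξ : ℝ) (p : Fin (M + 1) → ℝ) : ℝ :=
  (1 / (1 + ξ)) *
    ((∑ n : Fin (M + 1), p n / (1 + ξ) ^ (n : ℕ)) ^ 2 +
      (∑ n : Fin (M + 1), if 1 ≤ (n : ℕ) then p n * ξ / (1 + ξ) ^ (n : ℕ) else 0) ^ 2)

/-- Feasibility: `p_n ≥ 0`, `∑ p_n = 1`, `∑ n p_n ≤ E`. -/
def FeasibleUni (M : ℕ) (E : ℝ) (p : Fin (M + 1) → ℝ) : Prop :=
  (∀ n, 0 ≤ p n) ∧ (∑ n, p n = 1) ∧ (∑ n : Fin (M + 1), ((n : ℕ) : ℝ) * p n ≤ E)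

/-- The candidate optimal point: `p_0 = 1 - E`, `p_1 = E`, `p_n = 0` for `n ≥ 2`. -/
noncomputable def optUni (M : ℕ) (E : ℝ) : Fin (M + 1) → ℝ :=
  fun n => if (n : ℕ) = 0 then 1 - E else if (n : ℕ) = 1 then E else 0

lemma bern {t : ℝ} (ht0 : 0 < t) (m : ℕ) : 1 + (m:ℝ)*(t-1) ≤ t^m := by
  simpa using one_add_mul_sub_le_pow (by linarith) m

lemma bern_strict {t : ℝ} (ht0 : 0 < t) (ht1 : t < 1) :
    ∀ m : ℕ, 2 ≤ m → 1 + (m:ℝ)*(t-1) < t^m := by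
  intro m hm
  induction m, hm using Nat.le_induction with
  | base => push_cast; nlinarith [sq_nonneg (t-1)]
  | succ n hn ih =>
    have h1 : t*(1 + (n:ℝ)*(t-1)) < t*t^n := mul_lt_mul_of_pos_left ih ht0
    have h2 : (0:ℝ) ≤ (n:ℝ)*(t-1)^2 := by positivity
    push_cast
    calc 1 + ((n:ℝ)+1)*(t-1) ≤ t*(1+(n:ℝ)*(t-1)) := by nlinarith
    _ < t * t^n := h1
    _ = t^(n+1) := by ring

set_option maxHeartbeats 4000000 in
lemma key (ξ E t : ℝ) (M : ℕ) (hξ : 0 < ξ) (hM : 1 ≤ M)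
    (hE0 : 0 ≤ E) (hE : E * (1 + 3*ξ) ≤ 1 + ξ)
    (htd : t = (1+ξ)⁻¹)
    (P : ℕ → ℝ) (hP0 : ∀ k, 0 ≤ P k)
    (hP1 : ∑ k ∈ range (M+1), P k = 1)
    (hPE : ∑ k ∈ range (M+1), (k:ℝ) * P k ≤ E) :
    (1 - ξ*E*t)^2 + (ξ*E*t)^2
      ≤ (∑ k ∈ range (M+1), P k * t^k)^2
        + (∑ k ∈ range (M+1), if 1 ≤ k then P k * ξ * t^k else 0)^2 ∧
    ((∑ k ∈ range (M+1), P k * t^k)^2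
        + (∑ k ∈ range (M+1), if 1 ≤ k then P k * ξ * t^k else 0)^2
       = (1 - ξ*E*t)^2 + (ξ*E*t)^2 →
      P 0 = 1 - E ∧ P 1 = E ∧ ∀ k, 2 ≤ k → k ≤ M → P k = 0) := by
  have hu : (0:ℝ) < 1+ξ := by linarith
  have ht0 : 0 < t := by rw [htd]; positivity
  have htu : t*(1+ξ) = 1 := by rw [htd]; field_simp
  have ht1 : t < 1 := by nlinarith
  set aS := 1 - ξ*E*t with haS
  set bS := ξ*E*t with hbS
  set K := aS + ξ*bS with hKdef
  -- algebraic facts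
  have hd2 : aS - t*K = (ξ*(1+ξ) - 2*ξ^2*E)*t^2 := by
    rw [hKdef, haS, hbS, htd]; field_simp; ring
  have hd0 : 0 ≤ aS - t*K := by
    rw [hd2]
    have h : 0 ≤ ξ*(1+ξ)-2*ξ^2*E := by nlinarith [mul_le_mul_of_nonneg_left hE hξ.le]
    positivity
  have hK2 : K = (1+ξ-ξ*E+ξ^2*E)*t := by
    rw [hKdef, haS, hbS, htd]; field_simp
  have hKpos0 : 0 < 1+ξ-ξ*E+ξ^2*E := by
    nlinarith [mul_le_mul_of_nonneg_left hE hξ.le,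
      mul_nonneg hE0 (sq_nonneg (ξ-1)), mul_nonneg hE0 hξ.le]
  have hK0 : 0 < K := by rw [hK2]; exact mul_pos hKpos0 ht0
  have hphi2 : 0 ≤ K*t^2 + 2*(aS - t*K) - aS := by
    have h : K*t^2 + 2*(aS - t*K) - aS = ξ^2*((1+ξ) - E*(1+3*ξ))*t^3 := by
      rw [hKdef, haS, hbS, htd]; field_simp; ring
    rw [h]
    have h2 : 0 ≤ (1+ξ) - E*(1+3*ξ) := by linarith
    positivity
  have hphi : ∀ k : ℕ, 1 ≤ k → aS - k*(aS - t*K) ≤ K*t^k := by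
    intro k hk
    obtain ⟨m, rfl⟩ : ∃ m, k = m+1 := ⟨k-1, by omega⟩
    have hb := bern ht0 m
    have h1 : 0 ≤ K*t*(t^m - (1+(m:ℝ)*(t-1))) :=
      mul_nonneg (mul_nonneg hK0.le ht0.le) (by linarith)
    have h2 : 0 ≤ (m:ℝ)*(K*t^2+2*(aS - t*K)-aS) := mul_nonneg m.cast_nonneg hphi2
    push_cast
    rw [pow_succ]
    nlinarith [h1, h2]
  have hphis : ∀ k : ℕ, 3 ≤ k → aS - k*(aS - t*K) < K*t^k := by
    intro k hk
    obtain ⟨m, rfl⟩ : ∃ m, k = m+1 := ⟨k-1, by omega⟩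
    have hb := bern_strict ht0 ht1 m (by omega)
    have h1 : 0 < K*t*(t^m - (1+(m:ℝ)*(t-1))) :=
      mul_pos (mul_pos hK0 ht0) (by linarith)
    have h2 : 0 ≤ (m:ℝ)*(K*t^2+2*(aS - t*K)-aS) := mul_nonneg m.cast_nonneg hphi2
    push_cast
    rw [pow_succ]
    nlinarith [h1, h2]
  -- sums
  set a := ∑ k ∈ range (M+1), P k * t^k with ha
  set b := ∑ k ∈ range (M+1), (if 1 ≤ k then P k * ξ * t^k else 0) with hb
  have hab : aS*a + bS*b
      = ∑ k ∈ range (M+1), P k * (aS*t^k + (if 1 ≤ k then ξ*t^k else 0)*bS) := by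
    rw [ha, hb, mul_sum, mul_sum, ← sum_add_distrib]
    refine sum_congr rfl fun k _ => ?_
    by_cases hk : 1 ≤ k <;> simp [hk] <;> ring
  have hlow : ∀ k ∈ range (M+1),
      P k * (aS - (k:ℝ)*(aS - t*K)) ≤ P k * (aS*t^k + (if 1 ≤ k then ξ*t^k else 0)*bS) := by
    intro k _
    refine mul_le_mul_of_nonneg_left ?_ (hP0 k)
    by_cases hk : 1 ≤ k
    · rw [if_pos hk]
      have h1 := hphi k hk
      have h2 : aS*t^k + ξ*t^k*bS = K*t^k := by rw [hKdef]; ring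
      linarith
    · have hk0 : k = 0 := by omega
      subst hk0
      simp
  have hsumlin : ∑ k ∈ range (M+1), P k * (aS - (k:ℝ)*(aS - t*K))
      = aS - (aS - t*K) * (∑ k ∈ range (M+1), (k:ℝ)*P k) := by
    have h : ∀ k ∈ range (M+1), P k * (aS - (k:ℝ)*(aS - t*K))
        = aS * P k - (aS - t*K) * ((k:ℝ)*P k) := fun k _ => by ring
    rw [sum_congr rfl h, sum_sub_distrib, ← mul_sum, ← mul_sum, hP1, mul_one]
  have hopt : aS - E*(aS - t*K) = aS^2 + bS^2 := by
    rw [hKdef, haS, hbS, htd]; field_simp; ring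
  have hlin : aS^2 + bS^2 ≤ aS*a + bS*b := by
    have h1 := sum_le_sum hlow
    rw [hsumlin] at h1
    have h2 : aS - (aS - t*K)*E ≤ aS - (aS - t*K) * (∑ k ∈ range (M+1), (k:ℝ)*P k) := by
      have := mul_le_mul_of_nonneg_left hPE hd0
      linarith
    rw [← hab] at h1
    nlinarith [hopt]
  constructor
  · nlinarith [sq_nonneg (a-aS), sq_nonneg (b-bS), hlin]
  · intro heq
    have haa : a = aS := by nlinarith [sq_nonneg (a-aS), sq_nonneg (b-bS), hlin]
    have hbb : b = bS := by nlinarith [sq_nonneg (a-aS), sq_nonneg (b-bS), hlin]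
    -- the linear chain is tight
    have hS : aS*a + bS*b = aS^2 + bS^2 := by rw [haa, hbb]; ring
    have htight : ∑ k ∈ range (M+1), P k * (aS - (k:ℝ)*(aS - t*K))
        = ∑ k ∈ range (M+1), P k * (aS*t^k + (if 1 ≤ k then ξ*t^k else 0)*bS) := by
      have h1 := sum_le_sum hlow
      have h2 : aS - (aS - t*K)*E ≤ aS - (aS - t*K) * (∑ k ∈ range (M+1), (k:ℝ)*P k) := by
        have := mul_le_mul_of_nonneg_left hPE hd0
        linarith
      rw [hsumlin] at h1 ⊢
      rw [← hab, hS] at h1 ⊢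
      linarith [hopt]
    have hterm := (sum_eq_sum_iff_of_le hlow).mp htight
    -- tail vanishes
    have htail : ∀ k, 3 ≤ k → k ≤ M → P k = 0 := by
      intro k hk3 hkM
      rcases (hP0 k).eq_or_lt with h | h
      · exact h.symm
      · exfalso
        have hmem : k ∈ range (M+1) := mem_range.mpr (by omega)
        have he := hterm k hmem
        rw [if_pos (by omega : 1 ≤ k)] at he
        have h2 : aS*t^k + ξ*t^k*bS = K*t^k := by rw [hKdef]; ring
        have h3 := hphis k hk3
        nlinarith [mul_lt_mul_of_pos_left h3 h]
    -- P 0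
    have hba : ξ*a - b = ξ*P 0 := by
      rw [ha, hb, mul_sum, ← sum_sub_distrib]
      rw [Finset.sum_eq_single 0]
      · simp
      · intro k _ hk0
        rw [if_pos (by omega : 1 ≤ k)]; ring
      · intro h
        exact absurd (mem_range.mpr (Nat.succ_pos M)) h
    have hP0v : P 0 = 1 - E := by
      have h1 : ξ*P 0 = ξ*(1-E) := by
        rw [← hba, haa, hbb]
        simp only [haS, hbS]
        linear_combination (-(ξ*E))*htu
      exact mul_left_cancel₀ (ne_of_gt hξ) h1
    rcases lt_or_ge M 2 with hM2 | hM2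
    · have hM1 : M = 1 := by omega
      subst hM1
      rw [show (1:ℕ)+1 = 2 from rfl, sum_range_succ, sum_range_succ, sum_range_zero] at hP1
      refine ⟨hP0v, by linarith, ?_⟩
      intro k hk2 hkM
      exact absurd (hk2.trans hkM) (by norm_num)
    · -- M ≥ 2 : reduce sums to range 3
      have hzero3 : ∀ k ∈ range (M+1), k ∉ range 3 → P k = 0 := by
        intro k hk hk3
        rw [mem_range] at hk hk3
        exact htail k (by omega) (by omega)
      have hsub : range 3 ⊆ range (M+1) := by
        intro k hk; rw [mem_range] at *; omega
      have hPsum3 : P 0 + P 1 + P 2 = 1 := by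
        have h := (sum_subset hsub hzero3).trans hP1
        simp [sum_range_succ] at h
        linarith
      have hb3 : ∑ k ∈ range 3, (if 1 ≤ k then P k * ξ * t^k else 0) = bS := by
        rw [← hbb, hb]
        exact sum_subset hsub fun k hk hk3 => by
          rw [mem_range] at hk hk3
          rw [htail k (by omega) (by omega)]
          simp
      have hb3' : P 1 * (ξ*t) + P 2 * (ξ*t^2) = ξ*E*t := by
        rw [hbS] at hb3
        simp [sum_range_succ] at hb3
        linarith [hb3]
      have hsum12 : P 1 + P 2 = E := by linarith [hPsum3, hP0v]
      have hP1t : P 1 + P 2 * t = E := by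
        have hx : ξ*t*(P 1 + P 2 * t - E) = 0 := by linear_combination hb3'
        have hxt : ξ*t ≠ 0 := by positivity
        have := mul_eq_zero.mp hx
        rcases this with h | h
        · exact absurd h hxt
        · linarith
      have hP2 : P 2 = 0 := by
        have h : P 2 * (1 - t) = 0 := by linarith
        rcases mul_eq_zero.mp h with h' | h'
        · exact h'
        · linarith
      refine ⟨hP0v, by linarith, ?_⟩
      intro k hk2 hkM
      rcases Nat.lt_or_ge k 3 with hk3 | hk3
      · have : k = 2 := by omega
        rw [this]; exact hP2
      · exact htail k hk3 hkM

theorem unidirectional_optimal_ineq_constraint (ξ E : ℝ) (M : ℕ) (hξ : 0 < ξ)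
    (hM : 1 ≤ M) (hE0 : 0 ≤ E) (hE : E ≤ (1 + ξ) / (1 + 3 * ξ)) :
    FeasibleUni M E (optUni M E) ∧
      ∀ p : Fin (M + 1) → ℝ, FeasibleUni M E p →
        fUni M ξ (optUni M E) ≤ fUni M ξ p ∧
          (fUni M ξ p = fUni M ξ (optUni M E) → p = optUni M E) := by
  have hu : (0:ℝ) < 1 + ξ := by linarith
  have h3 : (0:ℝ) < 1 + 3*ξ := by linarith
  have hE' : E * (1 + 3*ξ) ≤ 1 + ξ := (le_div_iff₀ h3).mp hE
  have hE1 : E ≤ 1 := by nlinarith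
  set t : ℝ := (1+ξ)⁻¹ with htd
  have htu : t*(1+ξ) = 1 := by rw [htd]; field_simp
  obtain ⟨m, rfl⟩ : ∃ m, M = m+1 := ⟨M-1, by omega⟩
  have ho1 : ∑ n : Fin (m+1+1), optUni (m+1) E n
      = ∑ k ∈ range (m+1+1), (if k = 0 then 1-E else if k = 1 then E else 0) :=
    Fin.sum_univ_eq_sum_range (fun k => if k = 0 then 1-E else if k = 1 then E else 0) (m+1+1)
  have ho1v : ∑ k ∈ range (m+1+1), (if k = 0 then 1-E else if k = 1 then E else 0) = 1 := by
    rw [sum_range_succ', sum_range_succ']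
    simp
  have ho2 : ∑ n : Fin (m+1+1), ((n:ℕ):ℝ) * optUni (m+1) E n
      = ∑ k ∈ range (m+1+1), (k:ℝ) * (if k = 0 then 1-E else if k = 1 then E else 0) :=
    Fin.sum_univ_eq_sum_range (fun k => (k:ℝ) * (if k = 0 then 1-E else if k = 1 then E else 0)) (m+1+1)
  have ho2v : ∑ k ∈ range (m+1+1), (k:ℝ) * (if k = 0 then 1-E else if k = 1 then E else 0) = E := by
    rw [sum_range_succ', sum_range_succ']
    simp
  have ho3 : ∑ n : Fin (m+1+1), optUni (m+1) E n / (1+ξ)^(n:ℕ)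
      = ∑ k ∈ range (m+1+1), (if k = 0 then 1-E else if k = 1 then E else 0) / (1+ξ)^k :=
    Fin.sum_univ_eq_sum_range (fun k => (if k = 0 then 1-E else if k = 1 then E else 0) / (1+ξ)^k) (m+1+1)
  have ho3v : ∑ k ∈ range (m+1+1), (if k = 0 then 1-E else if k = 1 then E else 0) / (1+ξ)^k
      = 1 - ξ*E*t := by
    rw [sum_range_succ', sum_range_succ']
    have hz : ∑ i ∈ range m, (if i+1+1 = 0 then 1-E else if i+1+1 = 1 then E else 0) / (1+ξ)^(i+1+1) = 0 := by
      apply sum_eq_zero; intro i _; simp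
    rw [hz]
    simp only [if_pos rfl]
    norm_num
    rw [div_eq_mul_inv, ← htd]
    linear_combination E*htu
  have ho4 : ∑ n : Fin (m+1+1), (if 1 ≤ (n:ℕ) then optUni (m+1) E n * ξ / (1+ξ)^(n:ℕ) else 0)
      = ∑ k ∈ range (m+1+1), (if 1 ≤ k then (if k = 0 then 1-E else if k = 1 then E else 0) * ξ / (1+ξ)^k else 0) :=
    Fin.sum_univ_eq_sum_range (fun k => if 1 ≤ k then (if k = 0 then 1-E else if k = 1 then E else 0) * ξ / (1+ξ)^k else 0) (m+1+1)
  have ho4v : ∑ k ∈ range (m+1+1), (if 1 ≤ k then (if k = 0 then 1-E else if k = 1 then E else 0) * ξ / (1+ξ)^k else 0)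
      = ξ*E*t := by
    rw [sum_range_succ', sum_range_succ']
    have hz : ∑ i ∈ range m, (if 1 ≤ i+1+1 then (if i+1+1 = 0 then 1-E else if i+1+1 = 1 then E else 0) * ξ / (1+ξ)^(i+1+1) else 0) = 0 := by
      apply sum_eq_zero; intro i _; simp
    rw [hz]
    norm_num
    rw [div_eq_mul_inv, ← htd]
    ring
  have hfopt : fUni (m+1) ξ (optUni (m+1) E)
      = (1/(1+ξ)) * ((1 - ξ*E*t)^2 + (ξ*E*t)^2) := by
    unfold fUni
    rw [ho3, ho3v, ho4, ho4v]
  have hfeas : FeasibleUni (m+1) E (optUni (m+1) E) := by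
    refine ⟨?_, ?_, ?_⟩
    · intro n
      unfold optUni
      split_ifs <;> linarith
    · rw [ho1, ho1v]
    · rw [ho2, ho2v]
  refine ⟨hfeas, ?_⟩
  intro p hp
  obtain ⟨hp0, hp1, hpE⟩ := hp
  set P : ℕ → ℝ := fun k => if h : k < m+1+1 then p ⟨k, h⟩ else 0 with hPdef
  have hPn : ∀ n : Fin (m+1+1), P ↑n = p n := by
    intro n
    simp only [hPdef, n.isLt, dif_pos, Fin.eta]
  have hP0 : ∀ k, 0 ≤ P k := by
    intro k
    by_cases h : k < m+1+1
    · simp only [hPdef, dif_pos h]; exact hp0 _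
    · simp only [hPdef, dif_neg h]; exact le_refl 0
  have hP1 : ∑ k ∈ range (m+1+1), P k = 1 := by
    rw [← Fin.sum_univ_eq_sum_range P (m+1+1)]
    rw [sum_congr rfl (fun n _ => hPn n)]
    exact hp1
  have hPE : ∑ k ∈ range (m+1+1), (k:ℝ) * P k ≤ E := by
    have h : ∑ k ∈ range (m+1+1), (k:ℝ) * P k = ∑ n : Fin (m+1+1), ((n:ℕ):ℝ) * p n := by
      rw [← Fin.sum_univ_eq_sum_range (fun k => (k:ℝ) * P k) (m+1+1)]
      exact sum_congr rfl (fun n _ => by rw [hPn n])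
    rw [h]; exact hpE
  have hfp : fUni (m+1) ξ p
      = (1/(1+ξ)) * ((∑ k ∈ range (m+1+1), P k * t^k)^2
        + (∑ k ∈ range (m+1+1), if 1 ≤ k then P k * ξ * t^k else 0)^2) := by
    unfold fUni
    have e1 : ∑ n : Fin (m+1+1), p n / (1+ξ)^(n:ℕ)
        = ∑ k ∈ range (m+1+1), P k * t^k := by
      rw [← Fin.sum_univ_eq_sum_range (fun k => P k * t^k) (m+1+1)]
      refine sum_congr rfl fun n _ => ?_
      rw [hPn n, div_eq_mul_inv, htd, inv_pow]
    have e2 : ∑ n : Fin (m+1+1), (if 1 ≤ (n:ℕ) then p n * ξ / (1+ξ)^(n:ℕ) else 0)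
        = ∑ k ∈ range (m+1+1), (if 1 ≤ k then P k * ξ * t^k else 0) := by
      rw [← Fin.sum_univ_eq_sum_range (fun k => if 1 ≤ k then P k * ξ * t^k else 0) (m+1+1)]
      refine sum_congr rfl fun n _ => ?_
      by_cases h : 1 ≤ (n:ℕ)
      · rw [if_pos h, if_pos h, hPn n, div_eq_mul_inv, htd, inv_pow]
      · rw [if_neg h, if_neg h]
    rw [e1, e2]
  have hkey := key ξ E t (m+1) hξ (by omega) hE0 hE' htd P hP0 hP1 hPE
  constructor
  · rw [hfopt, hfp]
    have hpos : (0:ℝ) ≤ 1/(1+ξ) := by positivity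
    exact mul_le_mul_of_nonneg_left hkey.1 hpos
  · intro heq
    rw [hfp, hfopt] at heq
    have hne : (1/(1+ξ) : ℝ) ≠ 0 := by positivity
    have heq2 := mul_left_cancel₀ hne heq
    obtain ⟨h0, h1, h2⟩ := hkey.2 heq2
    funext n
    rw [← hPn n]
    unfold optUni
    by_cases h0' : (n:ℕ) = 0
    · rw [if_pos h0', h0']; exact h0
    · rw [if_neg h0']
      by_cases h1' : (n:ℕ) = 1
      · rw [if_pos h1', h1']; exact h1
      · rw [if_neg h1']
        exact h2 ↑n (by omega) (Nat.lt_succ_iff.mp n.isLt)
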